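/- Fix a finite population x : Fin N → ℝ with N ≥ 1 and real bounds a < b such that a ≤ x i ≤ b for all i. Let S be a uniformly random n-element subset of Fin N with 1 ≤ n ≤ N, let X̄ = (1/n) Σ_{i ∈ S} x i be the sample mean, and let μ = (1/N) Σ_i x i be the population mean. Then for every ε > 0, Pr[X̄ − μ ≥ ε] ≤ exp(−2 n ε² / ((1 − (n − 1)/N) · (b − a)²)). -/

import Mathlib

open Finset Real

private lemma hs_core (p : ℝ) (hp0 : 0 ≤ p) (hp1 : p ≤ 1) {h : ℝ} (hh : 0 ≤ h) :
    (1 - p) + p * Real.exp h ≤ Real.exp (p * h + h ^ 2 / 8) := by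
  set u : ℝ → ℝ := fun t => (1 - p) + p * Real.exp t with hu
  have hupos : ∀ t, 0 < u t := by
    intro t
    rcases eq_or_lt_of_le hp0 with hp | hp
    · simp [hu, ← hp]
    · have h0 := Real.exp_pos t
      have : 0 < p * Real.exp t := mul_pos hp h0
      simp only [hu]
      nlinarith
  have hud : ∀ t, HasDerivAt u (p * Real.exp t) t := fun t =>
    ((Real.hasDerivAt_exp t).const_mul p).const_add (1 - p)
  set G : ℝ → ℝ := fun t => p + t / 4 - p * Real.exp t / u t with hG
  set g : ℝ → ℝ := fun t => p * t + t ^ 2 / 8 - Real.log (u t) with hg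
  have hgd : ∀ t, HasDerivAt g (G t) t := by
    intro t
    have h2 : HasDerivAt (fun s : ℝ => p * s) (p * 1) t := (hasDerivAt_id t).const_mul p
    have h1 : HasDerivAt (fun s : ℝ => p * s + s ^ 2 / 8) (p + t / 4) t := by
      refine (h2.add ((hasDerivAt_pow 2 t).div_const 8)).congr_deriv ?_
      push_cast; ring
    have h3 : HasDerivAt (fun s => Real.log (u s)) (p * Real.exp t / u t) t :=
      (hud t).log (ne_of_gt (hupos t))
    exact h1.sub h3
  have hG0 : G 0 = 0 := by simp [hG, hu]
  have hGmono : Monotone G := by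
    apply monotone_of_hasDerivAt_nonneg (f' := fun t =>
      1 / 4 - (p * Real.exp t * u t - p * Real.exp t * (p * Real.exp t)) / (u t) ^ 2)
    · intro t
      have h4 : HasDerivAt (fun s => p * Real.exp s / u s)
          ((p * Real.exp t * u t - p * Real.exp t * (p * Real.exp t)) / (u t) ^ 2) t :=
        ((Real.hasDerivAt_exp t).const_mul p).div (hud t) (ne_of_gt (hupos t))
      have h5 : HasDerivAt (fun s : ℝ => p + s / 4) (1 / 4) t := by
        have := ((hasDerivAt_id t).div_const 4).const_add p
        exact this
      exact h5.sub h4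
    · intro t
      simp only [Pi.zero_apply]
      have h6 : 0 < u t := hupos t
      have h7 : 0 ≤ Real.exp t := (Real.exp_pos t).le
      have hut : u t = 1 - p + p * Real.exp t := rfl
      have key : 4 * (p * Real.exp t * u t - p * Real.exp t * (p * Real.exp t)) ≤ (u t) ^ 2 := by
        rw [hut]; nlinarith [sq_nonneg (1 - p - p * Real.exp t)]
      rw [sub_nonneg, div_le_iff₀ (by positivity)]
      nlinarith [key]
  have hGnn : ∀ t, 0 ≤ t → 0 ≤ G t := fun t ht => hG0 ▸ hGmono ht
  have hgmono : MonotoneOn g (Set.Ici (0 : ℝ)) := by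
    apply monotoneOn_of_hasDerivWithinAt_nonneg (convex_Ici 0)
      (fun t _ => (hgd t).continuousAt.continuousWithinAt)
      (fun t ht => (hgd t).hasDerivWithinAt)
    intro t ht
    rw [interior_Ici] at ht
    exact hGnn t (le_of_lt ht)
  have hg0 : g 0 = 0 := by simp [hg, hu]
  have hgh : 0 ≤ g h := by
    have := hgmono (Set.self_mem_Ici) (Set.mem_Ici.mpr hh) hh
    rw [hg0] at this; exact this
  have hlog : Real.log (u h) ≤ p * h + h ^ 2 / 8 := by
    simp only [hg] at hgh; linarith
  calc (1 - p) + p * Real.exp h = u h := rfl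
    _ = Real.exp (Real.log (u h)) := (Real.exp_log (hupos h)).symm
    _ ≤ Real.exp (p * h + h ^ 2 / 8) := Real.exp_le_exp.mpr hlog

private lemma hs_finite_hoeffding {ι : Type*} (J : Finset ι) (y : ι → ℝ) (c d t : ℝ)
    (hcd : c < d) (ht : 0 ≤ t) (hy : ∀ j ∈ J, c ≤ y j ∧ y j ≤ d) :
    ∑ j ∈ J, Real.exp (t * y j) ≤
      (J.card : ℝ) * Real.exp (t * ((∑ j ∈ J, y j) / (J.card : ℝ)) + t ^ 2 * (d - c) ^ 2 / 8) := by
  rcases J.eq_empty_or_nonempty with rfl | hJ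
  · simp
  have hm : 0 < (J.card : ℝ) := by exact_mod_cast card_pos.mpr hJ
  have hdc : 0 < d - c := by linarith
  set S := ∑ j ∈ J, y j with hS
  set ybar := S / (J.card : ℝ) with hybar
  have hSc : (J.card : ℝ) * c ≤ S := by
    calc (J.card : ℝ) * c = ∑ _j ∈ J, c := by rw [Finset.sum_const, nsmul_eq_mul]
      _ ≤ S := Finset.sum_le_sum (fun j hj => (hy j hj).1)
  have hSd : S ≤ (J.card : ℝ) * d := by
    calc S ≤ ∑ _j ∈ J, d := Finset.sum_le_sum (fun j hj => (hy j hj).2)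
      _ = (J.card : ℝ) * d := by rw [Finset.sum_const, nsmul_eq_mul]
  have hyb1 : c ≤ ybar := by rw [hybar, le_div_iff₀ hm]; linarith
  have hyb2 : ybar ≤ d := by rw [hybar, div_le_iff₀ hm]; linarith
  have hpt : ∀ j ∈ J, Real.exp (t * y j) ≤
      (d - y j) / (d - c) * Real.exp (t * c) + (y j - c) / (d - c) * Real.exp (t * d) := by
    intro j hj
    obtain ⟨h1, h2⟩ := hy j hj
    have hθ0 : 0 ≤ (d - y j) / (d - c) := div_nonneg (by linarith) hdc.le
    have hθ1 : 0 ≤ (y j - c) / (d - c) := div_nonneg (by linarith) hdc.le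
    have hsum : (d - y j) / (d - c) + (y j - c) / (d - c) = 1 := by field_simp; ring
    have hcv := convexOn_exp.2 (Set.mem_univ (t * c)) (Set.mem_univ (t * d)) hθ0 hθ1 hsum
    simp only [smul_eq_mul] at hcv
    have harg : (d - y j) / (d - c) * (t * c) + (y j - c) / (d - c) * (t * d) = t * y j := by
      field_simp; ring
    rwa [harg] at hcv
  set p := (ybar - c) / (d - c) with hp
  have hp0 : 0 ≤ p := div_nonneg (by linarith) hdc.le
  have hp1 : p ≤ 1 := by rw [hp, div_le_one hdc]; linarith
  have hstep1 : ∑ j ∈ J, Real.exp (t * y j) ≤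
      (J.card : ℝ) * ((1 - p) * Real.exp (t * c) + p * Real.exp (t * d)) := by
    calc ∑ j ∈ J, Real.exp (t * y j)
        ≤ ∑ j ∈ J, ((d - y j) / (d - c) * Real.exp (t * c)
            + (y j - c) / (d - c) * Real.exp (t * d)) := Finset.sum_le_sum hpt
      _ = ((J.card : ℝ) * d - S) / (d - c) * Real.exp (t * c)
            + (S - (J.card : ℝ) * c) / (d - c) * Real.exp (t * d) := by
          rw [Finset.sum_add_distrib, ← Finset.sum_mul, ← Finset.sum_mul,
            ← Finset.sum_div, ← Finset.sum_div, Finset.sum_sub_distrib,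
            Finset.sum_sub_distrib, Finset.sum_const, nsmul_eq_mul]
          simp [hS]
      _ = (J.card : ℝ) * ((1 - p) * Real.exp (t * c) + p * Real.exp (t * d)) := by
          rw [hp, hybar]; field_simp; ring
  have hstep2 : (1 - p) * Real.exp (t * c) + p * Real.exp (t * d)
      = Real.exp (t * c) * ((1 - p) + p * Real.exp (t * (d - c))) := by
    rw [show t * d = t * c + t * (d - c) by ring, Real.exp_add]; ring
  have hcore := hs_core p hp0 hp1 (h := t * (d - c)) (by positivity)
  have hfin : Real.exp (t * c) * Real.exp (p * (t * (d - c)) + (t * (d - c)) ^ 2 / 8)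
      = Real.exp (t * ybar + t ^ 2 * (d - c) ^ 2 / 8) := by
    rw [← Real.exp_add]
    congr 1
    rw [hp]
    field_simp
    ring
  calc ∑ j ∈ J, Real.exp (t * y j)
      ≤ (J.card : ℝ) * ((1 - p) * Real.exp (t * c) + p * Real.exp (t * d)) := hstep1
    _ = (J.card : ℝ) * (Real.exp (t * c) * ((1 - p) + p * Real.exp (t * (d - c)))) := by
        rw [hstep2]
    _ ≤ (J.card : ℝ) * (Real.exp (t * c)
          * Real.exp (p * (t * (d - c)) + (t * (d - c)) ^ 2 / 8)) := by
        apply mul_le_mul_of_nonneg_left _ hm.le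
        exact mul_le_mul_of_nonneg_left hcore (Real.exp_pos _).le
    _ = (J.card : ℝ) * Real.exp (t * ybar + t ^ 2 * (d - c) ^ 2 / 8) := by rw [hfin]

private lemma hs_decomp {α : Type*} [DecidableEq α] [Fintype α] (n : ℕ) (f : Finset α → ℝ) :
    ((n : ℝ) + 1) * ∑ S ∈ (univ : Finset α).powersetCard (n + 1), f S
      = ∑ T ∈ (univ : Finset α).powersetCard n, ∑ j ∈ univ \ T, f (insert j T) := by
  have h1 : ∀ S ∈ (univ : Finset α).powersetCard (n + 1),
      ((n : ℝ) + 1) * f S = ∑ _j ∈ S, f S := by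
    intro S hS
    rw [Finset.sum_const, nsmul_eq_mul, (Finset.mem_powersetCard_univ.mp hS)]
    push_cast; ring
  rw [Finset.mul_sum, Finset.sum_congr rfl h1, Finset.sum_sigma', Finset.sum_sigma']
  apply Finset.sum_nbij' (i := fun q => (⟨q.1.erase q.2, q.2⟩ :
      (_ : Finset α) × α)) (j := fun q => (⟨insert q.2 q.1, q.2⟩ : (_ : Finset α) × α))
  · intro q hq
    rw [Finset.mem_sigma] at hq ⊢
    obtain ⟨hS, hj⟩ := hq
    rw [Finset.mem_powersetCard_univ] at hS
    constructor
    · rw [Finset.mem_powersetCard_univ, Finset.card_erase_of_mem hj, hS]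
      omega
    · simp [Finset.mem_sdiff]
  · intro q hq
    rw [Finset.mem_sigma] at hq ⊢
    obtain ⟨hT, hj⟩ := hq
    rw [Finset.mem_powersetCard_univ] at hT
    rw [Finset.mem_sdiff] at hj
    constructor
    · rw [Finset.mem_powersetCard_univ, Finset.card_insert_of_notMem hj.2, hT]
    · simp
  · intro q hq
    rw [Finset.mem_sigma] at hq
    exact Sigma.ext (by simp [Finset.insert_erase hq.2]) (by simp)
  · intro q hq
    rw [Finset.mem_sigma] at hq
    rw [Finset.mem_sdiff] at hq
    exact Sigma.ext (by simp [Finset.erase_insert hq.2.2]) (by simp)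
  · intro q hq
    rw [Finset.mem_sigma] at hq
    simp [Finset.insert_erase hq.2]

private lemma hs_mgf (N : ℕ) (x : Fin N → ℝ) (a b : ℝ) (hab : a < b)
    (hx : ∀ i, a ≤ x i ∧ x i ≤ b) (t : ℝ) (ht : 0 ≤ t) :
    ∀ n : ℕ, n < N →
    ∑ S ∈ (univ : Finset (Fin N)).powersetCard n,
      Real.exp (t * ((∑ i ∈ S, x i - (n : ℝ) * (∑ i, x i) / N) / ((N : ℝ) - n)))
      ≤ (N.choose n : ℝ) * Real.exp (t ^ 2 * (b - a) ^ 2 / 8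
          * ∑ k ∈ Finset.range n, 1 / ((N : ℝ) - ((k : ℝ) + 1)) ^ 2) := by
  intro n
  induction n with
  | zero => intro _; simp
  | succ n ih =>
    intro hn
    have hnN : n < N := Nat.lt_of_succ_lt hn
    have ihn := ih hnN
    set X := ∑ i, x i with hX
    have hcast : ((n : ℝ) + 1) < (N : ℝ) := by exact_mod_cast hn
    have hD : (0 : ℝ) < (N : ℝ) - ((n : ℝ) + 1) := by linarith
    have hNn : (0 : ℝ) < (N : ℝ) - (n : ℝ) := by linarith
    have hN0 : (0 : ℝ) < (N : ℝ) := by linarith [hD]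
    set D := (N : ℝ) - ((n : ℝ) + 1) with hDdef
    -- inner bound for each T
    have hinner : ∀ T ∈ (univ : Finset (Fin N)).powersetCard n,
        ∑ j ∈ univ \ T,
            Real.exp (t * ((∑ i ∈ insert j T, x i - ((n : ℝ) + 1) * X / N) / D))
          ≤ ((N : ℝ) - (n : ℝ)) *
            Real.exp (t * ((∑ i ∈ T, x i - (n : ℝ) * X / N) / ((N : ℝ) - (n : ℝ)))
              + t ^ 2 * (b - a) ^ 2 / (8 * D ^ 2)) := by
      intro T hT
      rw [Finset.mem_powersetCard_univ] at hT
      set s := ∑ i ∈ T, x i with hs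
      have hcard : (((univ : Finset (Fin N)) \ T).card : ℝ) = (N : ℝ) - (n : ℝ) := by
        rw [Finset.card_sdiff_of_subset (Finset.subset_univ T), Finset.card_univ, Fintype.card_fin, hT]
        have : n ≤ N := le_of_lt hnN
        push_cast [this]
        ring
      have hsumc : ∑ j ∈ (univ : Finset (Fin N)) \ T, x j = X - s := by
        rw [Finset.sum_sdiff_eq_sub (Finset.subset_univ T)]
      set y : Fin N → ℝ := fun j => (s + x j - ((n : ℝ) + 1) * X / N) / D with hy
      set c := (s + a - ((n : ℝ) + 1) * X / N) / D with hc
      set d := (s + b - ((n : ℝ) + 1) * X / N) / D with hd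
      have hcd : c < d := by
        rw [hc, hd]
        exact (div_lt_div_iff_of_pos_right hD).mpr (by linarith)
      have hybound : ∀ j ∈ (univ : Finset (Fin N)) \ T, c ≤ y j ∧ y j ≤ d := by
        intro j _
        obtain ⟨h1, h2⟩ := hx j
        constructor
        · rw [hc, hy]
          exact (div_le_div_iff_of_pos_right hD).mpr (by linarith)
        · rw [hd, hy]
          exact (div_le_div_iff_of_pos_right hD).mpr (by linarith)
      have H := hs_finite_hoeffding ((univ : Finset (Fin N)) \ T) y c d t hcd ht hybound
      have hsumy : ∑ j ∈ (univ : Finset (Fin N)) \ T, y j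
          = (((N : ℝ) - (n : ℝ)) * (s - ((n : ℝ) + 1) * X / N) + (X - s)) / D := by
        simp only [hy]
        rw [← Finset.sum_div]
        congr 1
        have hterm : ∀ j : Fin N, s + x j - ((n : ℝ) + 1) * X / N
            = (s - ((n : ℝ) + 1) * X / N) + x j := fun j => by ring
        calc ∑ j ∈ (univ : Finset (Fin N)) \ T, (s + x j - ((n : ℝ) + 1) * X / N)
            = ∑ j ∈ (univ : Finset (Fin N)) \ T, ((s - ((n : ℝ) + 1) * X / N) + x j) :=
              Finset.sum_congr rfl (fun j _ => hterm j)
          _ = (((univ : Finset (Fin N)) \ T).card : ℝ) * (s - ((n : ℝ) + 1) * X / N)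
              + (X - s) := by
              rw [Finset.sum_add_distrib, Finset.sum_const, nsmul_eq_mul, hsumc]
          _ = ((N : ℝ) - (n : ℝ)) * (s - ((n : ℝ) + 1) * X / N) + (X - s) := by rw [hcard]
      have hdcval : d - c = (b - a) / D := by
        rw [hd, hc, div_sub_div_same]
        congr 1
        ring
      have hexp : t * ((∑ j ∈ (univ : Finset (Fin N)) \ T, y j)
            / ((((univ : Finset (Fin N)) \ T).card : ℝ))) + t ^ 2 * (d - c) ^ 2 / 8
          = t * ((s - (n : ℝ) * X / N) / ((N : ℝ) - (n : ℝ)))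
            + t ^ 2 * (b - a) ^ 2 / (8 * D ^ 2) := by
        rw [hcard, hsumy, hdcval]
        rw [hDdef]
        have hD' : (N:ℝ) - ((n:ℝ)+1) ≠ 0 := hD.ne'
        have hNn' := hNn.ne'
        have hN0' := hN0.ne'
        field_simp
        ring
      rw [hexp, hcard] at H
      calc ∑ j ∈ (univ : Finset (Fin N)) \ T,
            Real.exp (t * ((∑ i ∈ insert j T, x i - ((n : ℝ) + 1) * X / N) / D))
          = ∑ j ∈ (univ : Finset (Fin N)) \ T, Real.exp (t * y j) := by
            apply Finset.sum_congr rfl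
            intro j hj
            rw [Finset.sum_insert (Finset.mem_sdiff.mp hj).2, hy, hs]
            ring_nf
        _ ≤ _ := H
    -- assemble
    have hdec := hs_decomp n (fun S : Finset (Fin N) =>
      Real.exp (t * ((∑ i ∈ S, x i - ((n : ℝ) + 1) * X / N) / D)))
    have hchain : ((n : ℝ) + 1) * ∑ S ∈ (univ : Finset (Fin N)).powersetCard (n + 1),
          Real.exp (t * ((∑ i ∈ S, x i - ((n : ℝ) + 1) * X / N) / D))
        ≤ ((N : ℝ) - (n : ℝ)) * Real.exp (t ^ 2 * (b - a) ^ 2 / (8 * D ^ 2))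
          * ((N.choose n : ℝ) * Real.exp (t ^ 2 * (b - a) ^ 2 / 8
              * ∑ k ∈ Finset.range n, 1 / ((N : ℝ) - ((k : ℝ) + 1)) ^ 2)) := by
      rw [hdec]
      calc ∑ T ∈ (univ : Finset (Fin N)).powersetCard n, ∑ j ∈ univ \ T,
              Real.exp (t * ((∑ i ∈ insert j T, x i - ((n : ℝ) + 1) * X / N) / D))
          ≤ ∑ T ∈ (univ : Finset (Fin N)).powersetCard n,
              ((N : ℝ) - (n : ℝ)) *
                Real.exp (t * ((∑ i ∈ T, x i - (n : ℝ) * X / N) / ((N : ℝ) - (n : ℝ)))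
                  + t ^ 2 * (b - a) ^ 2 / (8 * D ^ 2)) := Finset.sum_le_sum hinner
        _ = ∑ T ∈ (univ : Finset (Fin N)).powersetCard n,
              (((N : ℝ) - (n : ℝ)) * Real.exp (t ^ 2 * (b - a) ^ 2 / (8 * D ^ 2)))
                * Real.exp (t * ((∑ i ∈ T, x i - (n : ℝ) * X / N) / ((N : ℝ) - (n : ℝ)))) :=
            Finset.sum_congr rfl (fun T _ => by rw [Real.exp_add]; ring)
        _ = ((N : ℝ) - (n : ℝ)) * Real.exp (t ^ 2 * (b - a) ^ 2 / (8 * D ^ 2))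
            * ∑ T ∈ (univ : Finset (Fin N)).powersetCard n,
                Real.exp (t * ((∑ i ∈ T, x i - (n : ℝ) * X / N) / ((N : ℝ) - (n : ℝ)))) := by
            rw [← Finset.mul_sum]
        _ ≤ ((N : ℝ) - (n : ℝ)) * Real.exp (t ^ 2 * (b - a) ^ 2 / (8 * D ^ 2))
            * ((N.choose n : ℝ) * Real.exp (t ^ 2 * (b - a) ^ 2 / 8
                * ∑ k ∈ Finset.range n, 1 / ((N : ℝ) - ((k : ℝ) + 1)) ^ 2)) := by
            apply mul_le_mul_of_nonneg_left ihn
            positivity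
    have hchoose : ((N : ℝ) - (n : ℝ)) * (N.choose n : ℝ)
        = ((n : ℝ) + 1) * (N.choose (n + 1) : ℝ) := by
      have h := Nat.choose_succ_right_eq N n
      have hNn' : ((N - n : ℕ) : ℝ) = (N : ℝ) - (n : ℝ) := by
        push_cast [le_of_lt hnN]; ring
      have := congrArg (fun k : ℕ => (k : ℝ)) h
      push_cast at this
      rw [← hNn']
      push_cast
      linarith
    have hrs : ∑ k ∈ Finset.range (n + 1), 1 / ((N : ℝ) - ((k : ℝ) + 1)) ^ 2
        = (∑ k ∈ Finset.range n, 1 / ((N : ℝ) - ((k : ℝ) + 1)) ^ 2) + 1 / D ^ 2 := by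
      rw [Finset.sum_range_succ, hDdef]
    have hgoal : ∑ S ∈ (univ : Finset (Fin N)).powersetCard (n + 1),
          Real.exp (t * ((∑ i ∈ S, x i - ((n : ℝ) + 1) * X / N) / D))
        ≤ (N.choose (n + 1) : ℝ) * Real.exp (t ^ 2 * (b - a) ^ 2 / 8
            * ∑ k ∈ Finset.range (n + 1), 1 / ((N : ℝ) - ((k : ℝ) + 1)) ^ 2) := by
      have hn1pos : (0 : ℝ) < (n : ℝ) + 1 := by positivity
      rw [← mul_le_mul_iff_right₀ hn1pos]
      calc ((n : ℝ) + 1) * ∑ S ∈ (univ : Finset (Fin N)).powersetCard (n + 1),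
              Real.exp (t * ((∑ i ∈ S, x i - ((n : ℝ) + 1) * X / N) / D))
          ≤ ((N : ℝ) - (n : ℝ)) * Real.exp (t ^ 2 * (b - a) ^ 2 / (8 * D ^ 2))
            * ((N.choose n : ℝ) * Real.exp (t ^ 2 * (b - a) ^ 2 / 8
                * ∑ k ∈ Finset.range n, 1 / ((N : ℝ) - ((k : ℝ) + 1)) ^ 2)) := hchain
        _ = ((n : ℝ) + 1) * ((N.choose (n + 1) : ℝ) * Real.exp (t ^ 2 * (b - a) ^ 2 / 8
              * ∑ k ∈ Finset.range (n + 1), 1 / ((N : ℝ) - ((k : ℝ) + 1)) ^ 2)) := by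
            rw [hrs, mul_add, Real.exp_add]
            have hE : t ^ 2 * (b - a) ^ 2 / 8 * (1 / D ^ 2)
                = t ^ 2 * (b - a) ^ 2 / (8 * D ^ 2) := by
              field_simp
            rw [hE]
            linear_combination Real.exp (t ^ 2 * (b - a) ^ 2 / 8
                * ∑ k ∈ Finset.range n, 1 / ((N : ℝ) - ((k : ℝ) + 1)) ^ 2)
              * Real.exp (t ^ 2 * (b - a) ^ 2 / (8 * D ^ 2)) * hchoose
    push_cast
    rw [← hDdef]
    exact hgoal

private lemma hs_sum_bound (N : ℕ) : ∀ n : ℕ, 1 ≤ n → n < N →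
    ((N : ℝ) - n) ^ 2 * ∑ k ∈ Finset.range n, 1 / ((N : ℝ) - ((k : ℝ) + 1)) ^ 2
      ≤ (n : ℝ) * ((N : ℝ) - (n : ℝ) + 1) / N := by
  intro n
  induction n with
  | zero => intro h; exact absurd h (by omega)
  | succ n ih =>
    intro _ hn
    have hN0 : (0 : ℝ) < N := by
      have : 0 < N := by omega
      exact_mod_cast this
    rcases Nat.eq_zero_or_pos n with rfl | hn1
    · have h2 : (2 : ℝ) ≤ (N : ℝ) := by exact_mod_cast hn
      have hne : (N : ℝ) - 1 ≠ 0 := by intro h; nlinarith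
      push_cast
      rw [Finset.sum_range_one]
      rw [show ((Nat.cast 0 :ℝ) + 1) = 1 by norm_num, le_div_iff₀ hN0, one_mul]
      have hone : ((N : ℝ) - 1) ^ 2 * (1 / ((N : ℝ) - 1) ^ 2) = 1 := by field_simp
      rw [hone, one_mul]
      linarith
    · have ihh := ih hn1 (by omega)
      have h1 : (1 : ℝ) ≤ (n : ℝ) := by exact_mod_cast hn1
      have h2 : (n : ℝ) + 2 ≤ (N : ℝ) := by exact_mod_cast (by omega : n + 2 ≤ N)
      set A := ∑ k ∈ Finset.range n, 1 / ((N : ℝ) - ((k : ℝ) + 1)) ^ 2 with hA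
      have hA0 : 0 ≤ A := by
        rw [hA]; positivity
      have ihh' : (N : ℝ) * (((N : ℝ) - n) ^ 2 * A) ≤ (n : ℝ) * ((N : ℝ) - n + 1) := by
        have := (le_div_iff₀ hN0).mp ihh
        linarith
      have key' := mul_le_mul_of_nonneg_left ihh' (sq_nonneg ((N : ℝ) - (n : ℝ) - 1))
      have main : (n : ℝ) * ((N : ℝ) - n + 1) * ((N : ℝ) - n - 1) ^ 2
            + (N : ℝ) * ((N : ℝ) - n) ^ 2 ≤ ((n : ℝ) + 1) * ((N : ℝ) - n) ^ 3 := by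
        nlinarith [mul_nonneg (by linarith : (0:ℝ) ≤ (n : ℝ))
          (by linarith : (0:ℝ) ≤ (N : ℝ) - n - 1)]
      rw [Finset.sum_range_succ, ← hA]
      push_cast
      rw [le_div_iff₀ hN0]
      have hD1 : ((N : ℝ) - ((n : ℝ) + 1)) ≠ 0 := by intro h; nlinarith
      have goal2 : (((N : ℝ) - ((n : ℝ) + 1)) ^ 2 * (A + 1 / ((N : ℝ) - ((n : ℝ) + 1)) ^ 2) * N)
            * ((N : ℝ) - n) ^ 2
          ≤ (((n : ℝ) + 1) * ((N : ℝ) - ((n : ℝ) + 1) + 1)) * ((N : ℝ) - n) ^ 2 := by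
        have expand : (((N : ℝ) - ((n : ℝ) + 1)) ^ 2 * (A + 1 / ((N : ℝ) - ((n : ℝ) + 1)) ^ 2) * N)
              * ((N : ℝ) - n) ^ 2
            = ((N : ℝ) - n - 1) ^ 2 * ((N : ℝ) * (((N : ℝ) - n) ^ 2 * A))
              + (N : ℝ) * ((N : ℝ) - n) ^ 2 := by
          field_simp
          ring
        rw [expand]
        nlinarith [key', main]
      have hpos : (0 : ℝ) < ((N : ℝ) - n) ^ 2 := by
        have : (0 : ℝ) < (N : ℝ) - n := by linarith
        positivity
      exact le_of_mul_le_mul_right goal2 hpos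

private lemma hs_count (N n : ℕ) (hn1 : 1 ≤ n) (hnN : n ≤ N)
    (x : Fin N → ℝ) (a b : ℝ) (hab : a < b) (hx : ∀ i, a ≤ x i ∧ x i ≤ b)
    (ε : ℝ) (hε : 0 < ε) (F : Finset (Finset (Fin N)))
    (hF : F ⊆ (univ : Finset (Fin N)).powersetCard n)
    (hFE : ∀ S ∈ F, (1 / (n : ℝ)) * ∑ i ∈ S, x i - (1 / (N : ℝ)) * ∑ i, x i ≥ ε) :
    (F.card : ℝ) / ((((univ : Finset (Fin N)).powersetCard n).card : ℝ))
      ≤ Real.exp (-2 * n * ε ^ 2 / ((1 - ((n : ℝ) - 1) / N) * (b - a) ^ 2)) := by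
  have hN1 : 1 ≤ N := le_trans hn1 hnN
  have hN0 : (0 : ℝ) < N := by exact_mod_cast Nat.lt_of_lt_of_le Nat.zero_lt_one hN1
  have hn0 : (0 : ℝ) < n := by exact_mod_cast hn1
  have hPcard : (((univ : Finset (Fin N)).powersetCard n).card : ℝ) = (N.choose n : ℝ) := by
    rw [Finset.card_powersetCard, Finset.card_univ, Fintype.card_fin]
  have hC0 : (0 : ℝ) < (N.choose n : ℝ) := by exact_mod_cast Nat.choose_pos hnN
  rcases eq_or_lt_of_le hnN with rfl | hlt
  · -- n = N : the event is empty
    rcases F.eq_empty_or_nonempty with rfl | ⟨S, hS⟩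
    · simp [Real.exp_pos]
      positivity
    · exfalso
      have hSP := hF hS
      rw [Finset.mem_powersetCard_univ] at hSP
      have hSuniv : S = univ := by
        apply Finset.eq_univ_of_card
        rw [hSP, Fintype.card_fin]
      have h1 := hFE S hS
      rw [hSuniv] at h1
      have h2 : (1 / (n : ℝ)) * ∑ i, x i - (1 / (n : ℝ)) * ∑ i, x i = 0 := by ring
      rw [h2] at h1
      linarith
  · -- n < N : Chernoff
    set X := ∑ i, x i with hX
    set A := ∑ k ∈ Finset.range n, 1 / ((N : ℝ) - ((k : ℝ) + 1)) ^ 2 with hA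
    have hApos : 0 < A := by
      rw [hA]
      apply Finset.sum_pos
      · intro k hk
        rw [Finset.mem_range] at hk
        have : (k : ℝ) + 1 ≤ (N : ℝ) - 1 + 1 := by
          have : (k : ℝ) + 1 ≤ (n : ℝ) := by exact_mod_cast hk
          have : (n : ℝ) ≤ (N : ℝ) - 1 := by
            have : (n : ℝ) + 1 ≤ (N : ℝ) := by exact_mod_cast hlt
            linarith
          linarith
        have hpos : (0 : ℝ) < (N : ℝ) - ((k : ℝ) + 1) := by
          have hkn : (k : ℝ) + 1 ≤ (n : ℝ) := by exact_mod_cast hk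
          have hnN' : (n : ℝ) + 1 ≤ (N : ℝ) := by exact_mod_cast hlt
          linarith
        exact div_pos one_pos (pow_pos hpos 2)
      · exact Finset.nonempty_range_iff.mpr (by omega)
    set c := (b - a) ^ 2 / 8 * A with hc
    have hcpos : 0 < c := by
      rw [hc]
      exact mul_pos (div_pos (pow_pos (by linarith : (0:ℝ) < b - a) 2) (by norm_num)) hApos
    have hNn : (0 : ℝ) < (N : ℝ) - (n : ℝ) := by
      have : (n : ℝ) + 1 ≤ (N : ℝ) := by exact_mod_cast hlt
      linarith
    set t := (n : ℝ) * ε / (2 * c * ((N : ℝ) - n)) with ht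
    have htpos : 0 < t := by rw [ht]; positivity
    have hmgf := hs_mgf N x a b hab hx t htpos.le n hlt
    -- pointwise Chernoff on F
    have hpt : ∀ S ∈ F, Real.exp (t * ((n : ℝ) * ε / ((N : ℝ) - n)))
        ≤ Real.exp (t * ((∑ i ∈ S, x i - (n : ℝ) * X / N) / ((N : ℝ) - n))) := by
      intro S hS
      apply Real.exp_le_exp.mpr
      apply mul_le_mul_of_nonneg_left _ htpos.le
      apply (div_le_div_iff_of_pos_right hNn).mpr
      have h1 := hFE S hS
      have h2 := mul_le_mul_of_nonneg_left h1 hn0.le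
      have h3 : (n : ℝ) * ((1 / (n : ℝ)) * ∑ i ∈ S, x i - (1 / (N : ℝ)) * X)
          = ∑ i ∈ S, x i - (n : ℝ) * X / N := by
        field_simp
      rw [h3] at h2
      linarith
    have hcount : (F.card : ℝ) * Real.exp (t * ((n : ℝ) * ε / ((N : ℝ) - n)))
        ≤ (N.choose n : ℝ) * Real.exp (t ^ 2 * (b - a) ^ 2 / 8 * A) := by
      calc (F.card : ℝ) * Real.exp (t * ((n : ℝ) * ε / ((N : ℝ) - n)))
          = ∑ _S ∈ F, Real.exp (t * ((n : ℝ) * ε / ((N : ℝ) - n))) := by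
            rw [Finset.sum_const, nsmul_eq_mul]
        _ ≤ ∑ S ∈ F, Real.exp (t * ((∑ i ∈ S, x i - (n : ℝ) * X / N) / ((N : ℝ) - n))) :=
            Finset.sum_le_sum hpt
        _ ≤ ∑ S ∈ (univ : Finset (Fin N)).powersetCard n,
              Real.exp (t * ((∑ i ∈ S, x i - (n : ℝ) * X / N) / ((N : ℝ) - n))) :=
            Finset.sum_le_sum_of_subset_of_nonneg hF (fun S _ _ => (Real.exp_pos _).le)
        _ ≤ (N.choose n : ℝ) * Real.exp (t ^ 2 * (b - a) ^ 2 / 8 * A) := hmgf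
    have hratio : (F.card : ℝ) / (N.choose n : ℝ)
        ≤ Real.exp (t ^ 2 * (b - a) ^ 2 / 8 * A - t * ((n : ℝ) * ε / ((N : ℝ) - n))) := by
      rw [Real.exp_sub, div_le_div_iff₀ hC0 (Real.exp_pos _)]
      calc (F.card : ℝ) * Real.exp (t * ((n : ℝ) * ε / ((N : ℝ) - n)))
          ≤ (N.choose n : ℝ) * Real.exp (t ^ 2 * (b - a) ^ 2 / 8 * A) := hcount
        _ = Real.exp (t ^ 2 * (b - a) ^ 2 / 8 * A) * (N.choose n : ℝ) := by ring
    -- exponent computation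
    have hQB : t ^ 2 * (b - a) ^ 2 / 8 * A - t * ((n : ℝ) * ε / ((N : ℝ) - n))
        = -((n : ℝ) ^ 2 * ε ^ 2 / (4 * c * ((N : ℝ) - n) ^ 2)) := by
      rw [ht, hc]
      have hba : (b - a) ≠ 0 := (by linarith : (0:ℝ) < b - a).ne'
      field_simp
      ring
    have hsb := hs_sum_bound N n hn1 hlt
    rw [← hA] at hsb
    have hsb' : (N : ℝ) * (((N : ℝ) - n) ^ 2 * A) ≤ (n : ℝ) * ((N : ℝ) - n + 1) := by
      have h4 := (le_div_iff₀ hN0).mp hsb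
      linarith
    have hNn1 : (0 : ℝ) < (N : ℝ) - n + 1 := by linarith
    have hba2 : (0 : ℝ) < (b - a) ^ 2 := pow_pos (by linarith) 2
    have hGle : -((n : ℝ) ^ 2 * ε ^ 2 / (4 * c * ((N : ℝ) - n) ^ 2))
        ≤ -(2 * (n : ℝ) * ε ^ 2 * N / (((N : ℝ) - n + 1) * (b - a) ^ 2)) := by
      rw [neg_le_neg_iff, div_le_div_iff₀ (mul_pos hNn1 hba2)
        (mul_pos (mul_pos (by norm_num : (0:ℝ) < 4) hcpos) (pow_pos hNn 2))]
      rw [hc]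
      calc 2 * (n : ℝ) * ε ^ 2 * (N : ℝ) * (4 * ((b - a) ^ 2 / 8 * A) * ((N : ℝ) - n) ^ 2)
          = ((n : ℝ) * ε ^ 2 * (b - a) ^ 2) * ((N : ℝ) * (((N : ℝ) - n) ^ 2 * A)) := by ring
        _ ≤ ((n : ℝ) * ε ^ 2 * (b - a) ^ 2) * ((n : ℝ) * ((N : ℝ) - n + 1)) :=
            mul_le_mul_of_nonneg_left hsb' (by positivity)
        _ = (n : ℝ) ^ 2 * ε ^ 2 * (((N : ℝ) - n + 1) * (b - a) ^ 2) := by ring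
    have harg : -(2 * (n : ℝ) * ε ^ 2 * N / (((N : ℝ) - n + 1) * (b - a) ^ 2))
        = -2 * n * ε ^ 2 / ((1 - ((n : ℝ) - 1) / N) * (b - a) ^ 2) := by
      have hba : (b - a) ≠ 0 := (by linarith : (0:ℝ) < b - a).ne'
      have h5 : (1 - ((n : ℝ) - 1) / N) = ((N : ℝ) - n + 1) / N := by
        field_simp
        ring
      rw [h5]
      field_simp
      try ring
    rw [hPcard]
    calc (F.card : ℝ) / (N.choose n : ℝ)
        ≤ Real.exp (t ^ 2 * (b - a) ^ 2 / 8 * A - t * ((n : ℝ) * ε / ((N : ℝ) - n))) := hratio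
      _ ≤ Real.exp (-2 * n * ε ^ 2 / ((1 - ((n : ℝ) - 1) / N) * (b - a) ^ 2)) := by
          apply Real.exp_le_exp.mpr
          rw [hQB, ← harg]
          exact hGle

/-- One-sided Hoeffding–Serfling bound for sampling without replacement: the probability
that the sample mean exceeds the population mean by at least `ε` is at most
`exp(−2nε² / ((1 − (n−1)/N)(b−a)²))`. -/
theorem hoeffding_serfling_one_sided
    (N n : ℕ) (hN : 1 ≤ N) (hn1 : 1 ≤ n) (hnN : n ≤ N)
    (x : Fin N → ℝ) (a b : ℝ) (hab : a < b) (hx : ∀ i, a ≤ x i ∧ x i ≤ b)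
    (ε : ℝ) (hε : 0 < ε) :
    (PMF.uniformOfFinset ((univ : Finset (Fin N)).powersetCard n)
        (Finset.powersetCard_nonempty.mpr (by simpa using hnN))).toOuterMeasure
      {S : Finset (Fin N) |
        (1 / (n : ℝ)) * ∑ i ∈ S, x i - (1 / (N : ℝ)) * ∑ i, x i ≥ ε} ≤
    ENNReal.ofReal
      (Real.exp (-2 * n * ε ^ 2 / ((1 - ((n : ℝ) - 1) / N) * (b - a) ^ 2))) := by
  classical
  rw [PMF.toOuterMeasure_uniformOfFinset_apply]
  set P := (univ : Finset (Fin N)).powersetCard n with hP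
  set F := P.filter (· ∈ {S : Finset (Fin N) |
    (1 / (n : ℝ)) * ∑ i ∈ S, x i - (1 / (N : ℝ)) * ∑ i, x i ≥ ε}) with hF
  have hC0 : 0 < P.card := Finset.Nonempty.card_pos
    (Finset.powersetCard_nonempty.mpr (by simpa using hnN))
  have hconv : (F.card : ENNReal) / (P.card : ENNReal)
      = ENNReal.ofReal ((F.card : ℝ) / (P.card : ℝ)) := by
    rw [ENNReal.ofReal_div_of_pos (by exact_mod_cast hC0)]
    rw [ENNReal.ofReal_natCast, ENNReal.ofReal_natCast]
  rw [hconv]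
  apply ENNReal.ofReal_le_ofReal
  apply hs_count N n hn1 hnN x a b hab hx ε hε F (Finset.filter_subset _ _)
  intro S hS
  exact (Finset.mem_filter.mp hS).2
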